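/- (Deterministic core of the class estimation theorem, Round-Robin case.) Let β be a nonnegative antitone function on the positive integers. Consider A agents with means μ_1,…,μ_A ∈ ℝ and, for each l, a function x̄_l : {1,2,…} → ℝ (the local average of agent l after n samples) satisfying |x̄_l(n) − μ_l| ≤ β(n) for all n ≥ 1. Fix an agent a such that there exists l with μ_l ≠ μ_a, and let Δ_a = min{ |μ_a − μ_l| : μ_l ≠ μ_a } > 0 and let n* be the smallest positive integer with β(n*) < Δ_a/4 (assumed to exist). Let n_l : ℕ → ℕ be memory counts satisfying t − A + 1 ≤ n_l(t) ≤ t for all t ≥ A and all l, with n_a(t) = t. Then for every time t > n* + A − 1, the optimistic similarity class C_a^t = { l : |x̄_a(t) − x̄_l(n_l(t))| − β(t) − β(n_l(t)) ≤ 0 } equals the true similarity class C_a = { l : μ_l = μ_a }. -/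

import Mathlib

/-- **Deterministic core of the class estimation theorem (Round-Robin case,
Theorem 1 of the paper).**
Under the event `E` (every local average of every agent after `n ≥ 1` samples lies
within the nonnegative antitone confidence bound `β n` of its true mean), for
Round-Robin memory counts (`t − A + 1 ≤ n_l(t) ≤ t`, with `n_a(t) = t`), and for every
time `t > n* + A − 1` where `n*` is the smallest positive integer with `β(n*) < Δ_a/4`
and `Δ_a = min{|μ a − μ l| : μ l ≠ μ a} > 0`, the optimistic similarity class of agent
`a` equals its true similarity class. -/
theorem class_estimation_deterministic_core
    (A : ℕ) (β : ℕ → ℝ)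
    (hβ0 : ∀ n : ℕ, 1 ≤ n → 0 ≤ β n)
    (hβanti : ∀ m n : ℕ, 1 ≤ n → n ≤ m → β m ≤ β n)
    (μ : Fin A → ℝ) (xbar : Fin A → ℕ → ℝ)
    (hE : ∀ l : Fin A, ∀ n : ℕ, 1 ≤ n → |xbar l n - μ l| ≤ β n)
    (a : Fin A) (hex : ∃ l : Fin A, μ l ≠ μ a)
    (Δa : ℝ)
    (hΔa : IsLeast {d : ℝ | ∃ l : Fin A, μ l ≠ μ a ∧ d = |μ a - μ l|} Δa)
    (hΔapos : 0 < Δa)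
    (nstar : ℕ) (hnstar1 : 1 ≤ nstar) (hnstar2 : β nstar < Δa / 4)
    (hnstar3 : ∀ m : ℕ, 1 ≤ m → β m < Δa / 4 → nstar ≤ m)
    (nmem : Fin A → ℕ → ℕ)
    (hmem : ∀ l : Fin A, ∀ t : ℕ, A ≤ t →
      t - A + 1 ≤ nmem l t ∧ nmem l t ≤ t)
    (hself : ∀ t : ℕ, nmem a t = t) :
    ∀ t : ℕ, nstar + A - 1 < t →
      {l : Fin A |
          |xbar a t - xbar l (nmem l t)| - β t - β (nmem l t) ≤ 0} =
        {l : Fin A | μ l = μ a} := by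
  intro t ht
  have hA1 : 1 ≤ A := Fin.pos a
  have ht' : nstar + A ≤ t := by omega
  have htA : A ≤ t := by omega
  have ht1 : 1 ≤ t := by omega
  have hβt : β t < Δa / 4 := lt_of_le_of_lt (hβanti t nstar hnstar1 (by omega)) hnstar2
  ext l
  simp only [Set.mem_setOf_eq]
  have hml := hmem l t htA
  have hm1 : 1 ≤ nmem l t := by omega
  have hmstar : nstar ≤ nmem l t := by omega
  have hβm : β (nmem l t) < Δa / 4 :=
    lt_of_le_of_lt (hβanti (nmem l t) nstar hnstar1 hmstar) hnstar2
  have hEa := hE a t ht1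
  have hEl := hE l (nmem l t) hm1
  constructor
  · intro h
    by_contra hne
    have hΔle : Δa ≤ |μ a - μ l| := hΔa.2 ⟨l, hne, rfl⟩
    have : |μ a - μ l| ≤ β t + β (nmem l t) + (β t + β (nmem l t)) := by
      have h1 : |μ a - μ l| ≤ |μ a - xbar a t| + |xbar a t - xbar l (nmem l t)|
          + |xbar l (nmem l t) - μ l| := by
        calc |μ a - μ l| = |(μ a - xbar a t) + (xbar a t - xbar l (nmem l t))
            + (xbar l (nmem l t) - μ l)| := by ring_nf
          _ ≤ _ := by
            refine (abs_add_le _ _).trans ?_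
            exact add_le_add_left (abs_add_le _ _) _
      have h2 : |μ a - xbar a t| ≤ β t := by rw [abs_sub_comm]; exact hEa
      have h3 : |xbar a t - xbar l (nmem l t)| ≤ β t + β (nmem l t) := by linarith
      linarith
    linarith
  · intro h
    have : |xbar a t - xbar l (nmem l t)| ≤ β t + β (nmem l t) := by
      calc |xbar a t - xbar l (nmem l t)|
          = |(xbar a t - μ a) + (μ l - xbar l (nmem l t))| := by rw [h]; ring_nf
        _ ≤ |xbar a t - μ a| + |μ l - xbar l (nmem l t)| := abs_add_le _ _
        _ ≤ β t + β (nmem l t) := by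
            rw [abs_sub_comm (μ l)]; exact add_le_add hEa hEl
    linarith
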